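/- Fix d > 1. Let λ_n be a sequence of positive reals with λ_n → ∞, and for each n let f_{λ_n} be the unique fixed point of the truncated cavity operator T_{λ_n}, extended to ℝ by 1 on (-∞,-λ_n] and 0 on (λ_n,∞). If f : ℝ → [0,1] is a non-increasing function such that f_{λ_n}(x) → f(x) pointwise for every x ∈ ℝ, then f solves the un-truncated cavity equation: f(x) = exp(-d ∫_{-x}^{∞} (x+y)^{d-1} f(y) dy) for all x ∈ ℝ. -/

import Mathlib

open MeasureTheory Set Filter

/-- The truncated cavity operator `T`. -/
noncomputable def T (d lam : ℝ) (f : ℝ → ℝ) : ℝ → ℝ :=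
  fun x => Real.exp (-(d * ∫ y in (-x)..lam, (x + y) ^ (d - 1) * f y))

/-- `f` is the fixed point of the truncated cavity operator on `[-λ, λ]`
(non-increasing and `[0,1]`-valued there), extended to `ℝ` by `1` on `(-∞, -λ]`
and `0` on `(λ, ∞)`. -/
def ExtFixedPoint (d lam : ℝ) (f : ℝ → ℝ) : Prop :=
  AntitoneOn f (Icc (-lam) lam) ∧
  (∀ x ∈ Icc (-lam) lam, f x ∈ Icc (0 : ℝ) 1) ∧
  (∀ x ≤ -lam, f x = 1) ∧ (∀ x > lam, f x = 0) ∧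
  (∀ x ∈ Icc (-lam) lam, T d lam f x = f x)

/-- `f : ℝ → [0,1]` is a measurable solution of the un-truncated Mézard–Parisi
cavity equation `f(x) = exp(-d ∫_{-x}^∞ (x+y)^{d-1} f(y) dy)`, the integrals
being (finite and) well-defined. -/
def SolvesCavity (d : ℝ) (f : ℝ → ℝ) : Prop :=
  Measurable f ∧ (∀ x : ℝ, f x ∈ Icc (0 : ℝ) 1) ∧
  (∀ x : ℝ, IntegrableOn (fun y => (x + y) ^ (d - 1) * f y) (Ioi (-x))) ∧
  (∀ x : ℝ, f x = Real.exp (-(d * ∫ y in Ioi (-x), (x + y) ^ (d - 1) * f y)))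

section Helpers

variable {d l : ℝ} {F : ℝ → ℝ}

lemma extFP_nonneg (hF : ExtFixedPoint d l F) (hl : 0 < l) : ∀ x, 0 ≤ F x := by
  intro x
  rcases le_or_gt x (-l) with h | h
  · rw [hF.2.2.1 x h]; norm_num
  rcases le_or_gt x l with h2 | h2
  · exact (hF.2.1 x ⟨h.le, h2⟩).1
  · rw [hF.2.2.2.1 x h2]

lemma extFP_le_one (hF : ExtFixedPoint d l F) (hl : 0 < l) : ∀ x, F x ≤ 1 := by
  intro x
  rcases le_or_gt x (-l) with h | h
  · rw [hF.2.2.1 x h]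
  rcases le_or_gt x l with h2 | h2
  · exact (hF.2.1 x ⟨h.le, h2⟩).2
  · rw [hF.2.2.2.1 x h2]; norm_num

lemma extFP_anti (hF : ExtFixedPoint d l F) (hl : 0 < l) : Antitone F := by
  intro a b hab
  rcases le_or_gt b (-l) with hb | hb
  · rw [hF.2.2.1 b hb, hF.2.2.1 a (hab.trans hb)]
  rcases le_or_gt l b with hb2 | hb2
  · rcases lt_or_ge l b with hb3 | hb3
    · rw [hF.2.2.2.1 b hb3]; exact extFP_nonneg hF hl a
    · -- b = l
      have hbl : b = l := le_antisymm hb3 hb2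
      rcases le_or_gt a (-l) with ha | ha
      · rw [hF.2.2.1 a ha]; exact extFP_le_one hF hl b
      · exact hF.1 ⟨ha.le, hab.trans hb3⟩ ⟨(neg_nonpos.mpr hl.le).trans (hbl ▸ hl.le : (0:ℝ) ≤ b), hb3⟩ hab
  · rcases le_or_gt a (-l) with ha | ha
    · rw [hF.2.2.1 a ha]; exact extFP_le_one hF hl b
    · exact hF.1 ⟨ha.le, hab.trans hb2.le⟩ ⟨hb.le, hb2.le⟩ hab

/-- interval-integrability of the kernel times a bounded measurable function -/
lemma ker_integrableOn {G : ℝ → ℝ} (hGm : Measurable G) (hG0 : ∀ y, 0 ≤ G y)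
    (hG1 : ∀ y, G y ≤ 1) (hd : 1 < d) (x a b : ℝ) (hax : -x ≤ a) :
    IntegrableOn (fun y => (x + y) ^ (d - 1) * G y) (Ioc a b) := by
  have hmeas : Measurable (fun y => (x + y) ^ (d - 1) * G y) :=
    (((Real.continuous_rpow_const (by linarith)).comp
      (continuous_const.add continuous_id)).measurable).mul hGm
  refine Integrable.mono' (g := fun _ => (x + b) ^ (d - 1))
    (integrableOn_const (C := (x + b) ^ (d - 1)) measure_Ioc_lt_top.ne) hmeas.aestronglyMeasurable ?_
  rw [ae_restrict_iff' measurableSet_Ioc]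
  filter_upwards with y hy
  have h0 : (0:ℝ) ≤ x + y := by linarith [hy.1, hax]
  have h1 : 0 ≤ (x + y) ^ (d - 1) * G y :=
    mul_nonneg (Real.rpow_nonneg h0 _) (hG0 y)
  rw [Real.norm_eq_abs, abs_of_nonneg h1]
  calc (x + y) ^ (d - 1) * G y ≤ (x + y) ^ (d - 1) * 1 := by
        exact mul_le_mul_of_nonneg_left (hG1 y) (Real.rpow_nonneg h0 _)
    _ = (x + y) ^ (d - 1) := mul_one _
    _ ≤ (x + b) ^ (d - 1) := Real.rpow_le_rpow h0 (by linarith [hy.2]) (by linarith)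

lemma extFP_eq (hF : ExtFixedPoint d l F) (hl : 0 < l) {x : ℝ} (hx : x ∈ Icc (-l) l) :
    F x = Real.exp (-(d * ∫ y in Ioc (-x) l, (x + y) ^ (d - 1) * F y)) := by
  rw [← hF.2.2.2.2 x hx, T, intervalIntegral.integral_of_le (by linarith [hx.1] : -x ≤ l)]

lemma extFP_pos (hF : ExtFixedPoint d l F) (hl : 0 < l) {x : ℝ} (hx : x ∈ Icc (-l) l) :
    0 < F x := by
  rw [extFP_eq hF hl hx]; exact Real.exp_pos _

/-- primitive of the kernel -/
lemma ker_integral (hd : 1 < d) {x q : ℝ} (hxq : -x ≤ q) :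
    ∫ y in Ioo (-x) q, (x + y) ^ (d - 1) = (x + q) ^ d / d := by
  have h1 : ∫ y in Ioo (-x) q, (x + y) ^ (d - 1) = ∫ y in (-x)..q, (x + y) ^ (d - 1) := by
    rw [intervalIntegral.integral_of_le hxq, integral_Ioc_eq_integral_Ioo]
  have hd1 : d - 1 + 1 = d := by ring
  rw [h1, intervalIntegral.integral_comp_add_left (fun u => u ^ (d - 1)) x, add_neg_cancel,
    integral_rpow (Or.inl (by linarith)), hd1,
    Real.zero_rpow (by linarith : d ≠ 0)]
  ring

/-- the key upper bound: a mass `c` to the left of `q` forces exponential decay. -/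
lemma extFP_le_exp (hF : ExtFixedPoint d l F) (hl : 0 < l) (hd : 1 < d)
    {x q c : ℝ} (hx : x ∈ Icc (-l) l) (hxq : -x ≤ q) (hql : q ≤ l) (hc : 0 ≤ c)
    (hFc : ∀ t, t < q → c ≤ F t) :
    F x ≤ Real.exp (-(c * (x + q) ^ d)) := by
  have hFm : Measurable F := (extFP_anti hF hl).measurable
  have hF0 := extFP_nonneg hF hl
  have hF1 := extFP_le_one hF hl
  have hc1 : c ≤ 1 := le_trans (hFc (q - 1) (by linarith)) (hF1 _)
  have hint : IntegrableOn (fun y => (x + y) ^ (d - 1) * F y) (Ioc (-x) l) :=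
    ker_integrableOn hFm hF0 hF1 hd x (-x) l le_rfl
  have hnonneg : (0:ℝ → ℝ) ≤ᵐ[volume.restrict (Ioc (-x) l)]
      (fun y => (x + y) ^ (d - 1) * F y) :=
    (ae_restrict_iff' measurableSet_Ioc).mpr (Filter.Eventually.of_forall fun y hy =>
      mul_nonneg (Real.rpow_nonneg (by linarith [hy.1]) _) (hF0 y))
  have step1 : (∫ y in Ioc (-x) q, (x + y) ^ (d - 1) * F y)
      ≤ ∫ y in Ioc (-x) l, (x + y) ^ (d - 1) * F y :=
    setIntegral_mono_set hint hnonneg (Ioc_subset_Ioc_right hql).eventuallyLE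
  have step2 : (∫ y in Ioc (-x) q, (x + y) ^ (d - 1) * F y)
      = ∫ y in Ioo (-x) q, (x + y) ^ (d - 1) * F y := integral_Ioc_eq_integral_Ioo
  have step3 : c * ((x + q) ^ d / d) ≤ ∫ y in Ioo (-x) q, (x + y) ^ (d - 1) * F y := by
    have hintc : IntegrableOn (fun y => (x + y) ^ (d - 1) * c) (Ioo (-x) q) :=
      (ker_integrableOn (measurable_const) (fun _ => hc) (fun _ => hc1) hd x (-x) q
        le_rfl).mono_set Ioo_subset_Ioc_self
    have hintF : IntegrableOn (fun y => (x + y) ^ (d - 1) * F y) (Ioo (-x) q) :=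
      (ker_integrableOn hFm hF0 hF1 hd x (-x) q le_rfl).mono_set Ioo_subset_Ioc_self
    have hmono : (∫ y in Ioo (-x) q, (x + y) ^ (d - 1) * c)
        ≤ ∫ y in Ioo (-x) q, (x + y) ^ (d - 1) * F y := by
      refine setIntegral_mono_on hintc hintF measurableSet_Ioo ?_
      intro y hy
      exact mul_le_mul_of_nonneg_left (hFc y hy.2) (Real.rpow_nonneg (by linarith [hy.1]) _)
    calc c * ((x + q) ^ d / d) = (∫ y in Ioo (-x) q, (x + y) ^ (d - 1)) * c := by
          rw [ker_integral hd hxq]; ring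
      _ = ∫ y in Ioo (-x) q, (x + y) ^ (d - 1) * c := (integral_mul_const _ _).symm
      _ ≤ _ := hmono
  have hIge : c * ((x + q) ^ d / d) ≤ ∫ y in Ioc (-x) l, (x + y) ^ (d - 1) * F y := by
    rw [← step2] at step3; linarith
  rw [extFP_eq hF hl hx]
  apply Real.exp_le_exp.mpr
  have hd0 : (0:ℝ) < d := by linarith
  have : c * (x + q) ^ d = d * (c * ((x + q) ^ d / d)) := by
    field_simp
  rw [this]
  simp only [neg_le_neg_iff]
  exact mul_le_mul_of_nonneg_left hIge hd0.le

lemma exp_tail_hasDerivAt (hd : 1 < d) {c r : ℝ} (hc : 0 < c) {s : ℝ} (hs : 0 < s + r) :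
    HasDerivAt (fun u => -(1 / (c * d)) * Real.exp (-(c * (u + r) ^ d)))
      ((s + r) ^ (d - 1) * Real.exp (-(c * (s + r) ^ d))) s := by
  have h1 : HasDerivAt (fun u : ℝ => u + r) 1 s := (hasDerivAt_id s).add_const r
  have h2 : HasDerivAt (fun u : ℝ => (u + r) ^ d) (1 * d * (s + r) ^ (d - 1)) s :=
    h1.rpow_const (Or.inl hs.ne')
  have h3 := ((h2.const_mul c).neg).exp
  have h4 := h3.const_mul (-(1 / (c * d)))
  refine h4.congr_deriv ?_
  simp only [Pi.neg_apply]
  have hd0 : d ≠ 0 := by linarith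
  have hc0 : c ≠ 0 := hc.ne'
  field_simp

lemma exp_tail_tendsto (hd : 1 < d) {c r : ℝ} (hc : 0 < c) :
    Tendsto (fun u => -(1 / (c * d)) * Real.exp (-(c * (u + r) ^ d))) atTop (nhds 0) := by
  have t1 : Tendsto (fun u : ℝ => u + r) atTop atTop :=
    tendsto_atTop_add_const_right _ r tendsto_id
  have t2 : Tendsto (fun u : ℝ => (u + r) ^ d) atTop atTop :=
    (tendsto_rpow_atTop (by linarith : (0:ℝ) < d)).comp t1
  have t3 : Tendsto (fun u : ℝ => -(c * (u + r) ^ d)) atTop atBot :=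
    tendsto_neg_atBot_iff.mpr (t2.const_mul_atTop hc)
  have t4 : Tendsto (fun u : ℝ => Real.exp (-(c * (u + r) ^ d))) atTop (nhds 0) :=
    Real.tendsto_exp_atBot.comp t3
  have t5 := t4.const_mul (-(1 / (c * d)))
  simpa using t5

lemma exp_tail_nonneg {c r a : ℝ} (ha : 0 < a + r) :
    ∀ s ∈ Ioi a, 0 ≤ (s + r) ^ (d - 1) * Real.exp (-(c * (s + r) ^ d)) := fun s hs =>
  mul_nonneg (Real.rpow_nonneg (by have := hs.out; linarith) _) (Real.exp_pos _).le

/-- tail integrability and value for the standard dominating function. -/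
lemma exp_tail_integrableOn (hd : 1 < d) {c r a : ℝ} (hc : 0 < c) (ha : 0 < a + r) :
    IntegrableOn (fun s => (s + r) ^ (d - 1) * Real.exp (-(c * (s + r) ^ d))) (Ioi a) :=
  integrableOn_Ioi_deriv_of_nonneg'
    (fun s hs => exp_tail_hasDerivAt hd hc (by have := hs.out; linarith))
    (exp_tail_nonneg ha) (exp_tail_tendsto hd hc)

lemma exp_tail_integral (hd : 1 < d) {c r a : ℝ} (hc : 0 < c) (ha : 0 < a + r) :
    ∫ s in Ioi a, (s + r) ^ (d - 1) * Real.exp (-(c * (s + r) ^ d))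
      = (1 / (c * d)) * Real.exp (-(c * (a + r) ^ d)) := by
  rw [integral_Ioi_of_hasDerivAt_of_nonneg'
    (fun s hs => exp_tail_hasDerivAt hd hc (by have := hs.out; linarith))
    (exp_tail_nonneg ha) (exp_tail_tendsto hd hc)]
  ring


/-- Uniform positivity: the limit cannot be identically zero. -/
lemma exists_pos_point (d : ℝ) (hd : 1 < d)
    (lam : ℕ → ℝ) (hpos : ∀ n, 0 < lam n) (hlim : Tendsto lam atTop atTop)
    (F : ℕ → ℝ → ℝ) (hF : ∀ n, ExtFixedPoint d (lam n) (F n))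
    (f : ℝ → ℝ) (hf_anti : Antitone f) (hf_mem : ∀ x, f x ∈ Icc (0 : ℝ) 1)
    (hconv : ∀ x : ℝ, Tendsto (fun n => F n x) atTop (nhds (f x))) :
    ∃ p, p ≤ 0 ∧ 0 < f p := by
  have hd0 : (0:ℝ) < d := by linarith
  have hdne : d ≠ 0 := hd0.ne'
  have hdm1 : (0:ℝ) ≤ d - 1 := by linarith
  by_contra hcon
  push_neg at hcon
  have hf00 : f 0 = 0 := le_antisymm (hcon 0 le_rfl) (hf_mem 0).1
  have hf0 : ∀ x, f x = 0 := by
    intro x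
    rcases le_or_gt x 0 with h | h
    · exact le_antisymm (hcon x h) (hf_mem x).1
    · exact le_antisymm (hf00 ▸ hf_anti h.le) (hf_mem x).1
  -- the radius R and the threshold κ
  set lg2 : ℝ := Real.log 2 with hlg2def
  have hlg2pos : 0 < lg2 := Real.log_pos (by norm_num)
  have hlg2le : lg2 ≤ 1 := by
    have := Real.log_le_sub_one_of_pos (by norm_num : (0:ℝ) < 2)
    linarith
  have h2dpos : (0:ℝ) < (2:ℝ) ^ (d + 1) := Real.rpow_pos_of_pos (by norm_num) _
  have h2d1 : (1:ℝ) < (2:ℝ) ^ (d + 1) := by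
    have : (2:ℝ) ^ (0:ℝ) < (2:ℝ) ^ (d + 1) :=
      (Real.rpow_lt_rpow_left_iff (by norm_num)).mpr (by linarith)
    simpa using this
  set z : ℝ := (2:ℝ) ^ (d + 1) / lg2 with hzdef
  have hzpos : 0 < z := div_pos h2dpos hlg2pos
  have hz1 : 1 < z := (one_lt_div hlg2pos).mpr (by linarith)
  set ρ : ℝ := 2 * Real.log z with hρdef
  have hρpos : 0 < ρ := by
    have := Real.log_pos hz1; positivity
  set R : ℝ := max 1 (ρ ^ (1/d)) with hRdef
  have hR1 : (1:ℝ) ≤ R := le_max_left _ _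
  have hR0 : (0:ℝ) < R := lt_of_lt_of_le one_pos hR1
  have hRd : ρ ≤ R ^ d := by
    calc ρ = (ρ ^ (1/d)) ^ d := by
          rw [← Real.rpow_mul hρpos.le, one_div_mul_cancel hdne, Real.rpow_one]
      _ ≤ R ^ d := Real.rpow_le_rpow (Real.rpow_nonneg hρpos.le _) (le_max_right _ _) hd0.le
  have hRtail : (2:ℝ) ^ d * Real.exp (-((1/2) * R ^ d)) ≤ lg2 / 2 := by
    have h1 : Real.exp (-((1/2) * R ^ d)) ≤ Real.exp (-(ρ / 2)) :=
      Real.exp_le_exp.mpr (by linarith)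
    have h2 : Real.exp (-(ρ/2)) = z⁻¹ := by
      rw [hρdef, show -(2 * Real.log z / 2) = -Real.log z by ring, Real.exp_neg,
        Real.exp_log hzpos]
    have h3 : (2:ℝ)^d * z⁻¹ = lg2 / 2 := by
      rw [hzdef, inv_div, show d + 1 = d + 1 by rfl, Real.rpow_add_one (by norm_num : (2:ℝ) ≠ 0)]
      have h2dpos' : (0:ℝ) < (2:ℝ) ^ d := Real.rpow_pos_of_pos (by norm_num) _
      field_simp
    calc (2:ℝ)^d * Real.exp (-((1/2) * R ^ d)) ≤ (2:ℝ)^d * Real.exp (-(ρ/2)) :=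
          mul_le_mul_of_nonneg_left h1 (Real.rpow_nonneg (by norm_num) _)
      _ = lg2 / 2 := by rw [h2, h3]
  set κ : ℝ := lg2 / (2 * d * (2*R) ^ d) with hκdef
  have h2R0 : (0:ℝ) < 2 * R := by linarith
  have h2Rd : (0:ℝ) < (2*R) ^ d := Real.rpow_pos_of_pos h2R0 _
  have hκpos : 0 < κ := div_pos hlg2pos (by positivity)
  -- choose a good index n
  have hev : ∀ᶠ n in atTop, (R + 1 ≤ lam n) ∧ F n (-R) < 1/2 ∧ F n 0 < κ := by
    have e2 : ∀ᶠ n' in atTop, F n' (-R) < 1/2 :=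
      (hconv (-R)).eventually_lt_const (show f (-R) < 1/2 by rw [hf0 (-R)]; norm_num)
    have e3 : ∀ᶠ n' in atTop, F n' 0 < κ :=
      (hconv 0).eventually_lt_const (show f 0 < κ by rw [hf0 0]; exact hκpos)
    filter_upwards [hlim.eventually_ge_atTop (R+1), e2, e3] with n h1 h2 h3
    exact ⟨h1, h2, h3⟩
  obtain ⟨n, hn1, hn2, hn3⟩ := hev.exists
  clear_value z ρ
  have hl : 0 < lam n := hpos n
  have hFn := hF n
  have hanti := extFP_anti hFn hl
  have hF0 := extFP_nonneg hFn hl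
  have hF1 := extFP_le_one hFn hl
  have hFm : Measurable (F n) := hanti.measurable
  set l : ℝ := lam n with hldef
  -- the front
  set S : Set ℝ := {x | 1/2 ≤ F n x} with hSdef
  have hmem : -l ∈ S := by
    have : F n (-l) = 1 := hFn.2.2.1 (-l) le_rfl
    simp only [hSdef, mem_setOf_eq, this]; norm_num
  have hSne : S.Nonempty := ⟨-l, hmem⟩
  have hSub : ∀ x ∈ S, x ≤ -R := by
    intro x hx
    by_contra hxx; push_neg at hxx
    have : F n x ≤ F n (-R) := hanti hxx.le
    have : F n x < 1/2 := lt_of_le_of_lt this hn2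
    exact absurd hx.out (not_le.mpr this)
  have hbdd : BddAbove S := ⟨-R, hSub⟩
  set q : ℝ := sSup S with hqdef
  have hqR : q ≤ -R := csSup_le hSne hSub
  have hql : -l ≤ q := le_csSup hbdd hmem
  have hhalf : ∀ t, t < q → 1/2 ≤ F n t := by
    intro t ht
    obtain ⟨x, hxS, hx⟩ := exists_lt_of_lt_csSup hSne ht
    exact le_trans hxS.out (hanti hx.le)
  set m : ℝ := -q with hmdef
  have hmR : R ≤ m := by rw [hmdef]; linarith
  have hml : m ≤ l := by rw [hmdef]; linarith
  have hxt_mem : q + R ∈ Icc (-l) l := ⟨by linarith, by linarith⟩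
  have hlt : F n (q + R) < 1/2 := by
    by_contra hno; push_neg at hno
    have : q + R ≤ q := le_csSup hbdd hno
    linarith
  -- the fixed-point identity at the evaluation point
  have heq := extFP_eq hFn hl hxt_mem
  set I : ℝ := ∫ y in Ioc (-(q+R)) l, ((q+R) + y) ^ (d - 1) * F n y with hIdef
  have hlog : lg2 < d * I := by
    have h2 : Real.exp (-(d * I)) < 1/2 := by rw [hIdef, ← heq]; exact hlt
    have h3 : (1:ℝ)/2 = Real.exp (-lg2) := by
      rw [Real.exp_neg, Real.exp_log (by norm_num : (0:ℝ) < 2)]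
      norm_num
    rw [h3] at h2
    have := Real.exp_lt_exp.mp h2
    linarith
  -- split the integral at t1
  have hmxl : -(q+R) = m - R := by rw [hmdef]; ring
  set t1 : ℝ := min (m + R) l with ht1def
  have hmt1 : m - R ≤ t1 := le_min (by linarith) (by linarith)
  have ht1l : t1 ≤ l := min_le_right _ _
  have hii1 : IntervalIntegrable (fun y => ((q+R) + y) ^ (d - 1) * F n y) volume (m - R) t1 :=
    (intervalIntegrable_iff_integrableOn_Ioc_of_le hmt1).mpr
      (by rw [← hmxl]; exact ker_integrableOn hFm hF0 hF1 hd (q+R) (-(q+R)) t1 le_rfl)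
  have hii2 : IntervalIntegrable (fun y => ((q+R) + y) ^ (d - 1) * F n y) volume t1 l :=
    (intervalIntegrable_iff_integrableOn_Ioc_of_le ht1l).mpr
      ((ker_integrableOn hFm hF0 hF1 hd (q+R) (-(q+R)) l le_rfl).mono_set
        (Ioc_subset_Ioc_left (by rw [hmxl]; exact hmt1)))
  have hIsplit : I = (∫ y in (m-R)..t1, ((q+R) + y) ^ (d - 1) * F n y)
      + ∫ y in t1..l, ((q+R) + y) ^ (d - 1) * F n y := by
    rw [hIdef, hmxl, ← intervalIntegral.integral_of_le (le_trans hmt1 ht1l),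
      intervalIntegral.integral_add_adjacent_intervals hii1 hii2]
  -- first piece
  have bound1 : (∫ y in (m-R)..t1, ((q+R) + y) ^ (d - 1) * F n y) ≤ (2*R)^d * F n 0 := by
    have hpt : ∀ y ∈ Icc (m-R) t1, ((q+R) + y) ^ (d - 1) * F n y
        ≤ (2*R) ^ (d-1) * F n 0 := by
      intro y hy
      have hy1 : (0:ℝ) ≤ (q+R) + y := by
        have h := hy.1; linarith
      have hy2 : (q+R) + y ≤ 2*R := by
        have h : t1 ≤ m + R := by rw [ht1def]; exact min_le_left _ _
        have h2 := hy.2; linarith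
      have hy3 : F n y ≤ F n 0 := hanti (by linarith [hy.1])
      exact mul_le_mul (Real.rpow_le_rpow hy1 hy2 hdm1) hy3 (hF0 y)
        (Real.rpow_nonneg h2R0.le _)
    calc (∫ y in (m-R)..t1, ((q+R) + y) ^ (d - 1) * F n y)
        ≤ ∫ _ in (m-R)..t1, (2*R) ^ (d-1) * F n 0 :=
          intervalIntegral.integral_mono_on hmt1 hii1 intervalIntegrable_const hpt
      _ = (t1 - (m-R)) * ((2*R) ^ (d-1) * F n 0) := by
          rw [intervalIntegral.integral_const, smul_eq_mul]
      _ ≤ (2*R) * ((2*R) ^ (d-1) * F n 0) := by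
          apply mul_le_mul_of_nonneg_right _ (mul_nonneg (Real.rpow_nonneg h2R0.le _) (hF0 0))
          have h : t1 ≤ m + R := by rw [ht1def]; exact min_le_left _ _
          linarith
      _ = (2*R)^d * F n 0 := by
          have h2Rd' : (2*R)^d = (2*R)^(d-1) * (2*R) := by
            rw [← Real.rpow_add_one h2R0.ne' (d-1)]
            congr 1; ring
          rw [h2Rd']; ring
  -- second piece
  have bound2 : (∫ y in t1..l, ((q+R) + y) ^ (d - 1) * F n y)
      ≤ (2:ℝ)^(d-1) * ((1 / ((1/2) * d)) * Real.exp (-((1/2) * R ^ d))) := by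
    have hRHS : (0:ℝ) ≤ (2:ℝ)^(d-1) * ((1 / ((1/2) * d)) * Real.exp (-((1/2) * R ^ d))) := by
      positivity
    rcases le_or_gt l (m + R) with hcase | hcase
    · rw [ht1def, min_eq_right hcase, intervalIntegral.integral_same]
      exact hRHS
    · have ht1eq : t1 = m + R := by rw [ht1def, min_eq_left hcase.le]
      rw [ht1eq]
      set ψ : ℝ → ℝ := fun y => (2:ℝ)^(d-1) * ((y + q) ^ (d-1) * Real.exp (-((1/2) * (y + q) ^ d)))
        with hψdef
      have hRq : 0 < (m + R) + q := by rw [hmdef]; linarith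
      have hψint : IntegrableOn ψ (Ioi (m + R)) :=
        (exp_tail_integrableOn hd (by norm_num : (0:ℝ) < 1/2) hRq).const_mul _
      have hψii : IntervalIntegrable ψ volume (m+R) l :=
        (intervalIntegrable_iff_integrableOn_Ioc_of_le hcase.le).mpr
          (hψint.mono_set Ioc_subset_Ioi_self)
      have hii2' : IntervalIntegrable (fun y => ((q+R) + y) ^ (d - 1) * F n y) volume (m+R) l :=
        ht1eq ▸ hii2
      have hpt : ∀ y ∈ Icc (m+R) l, ((q+R) + y) ^ (d - 1) * F n y ≤ ψ y := by
        intro y hy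
        have hyq : R ≤ y + q := by rw [hmdef] at hy; linarith [hy.1]
        have hyq0 : (0:ℝ) ≤ y + q := by linarith
        have hker : ((q+R) + y) ^ (d-1) ≤ (2:ℝ)^(d-1) * (y + q) ^ (d-1) := by
          rw [← Real.mul_rpow (by norm_num) hyq0]
          exact Real.rpow_le_rpow (by linarith) (by linarith) hdm1
        have hFy : F n y ≤ Real.exp (-((1/2) * (y + q) ^ d)) := by
          have hmem2 : y ∈ Icc (-l) l := ⟨by linarith [hy.1, hmR, hR0], hy.2⟩
          exact extFP_le_exp hFn hl hd hmem2 (by linarith : -y ≤ q) (by linarith : q ≤ l)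
            (by norm_num : (0:ℝ) ≤ 1/2) hhalf
        calc ((q+R) + y) ^ (d - 1) * F n y
            ≤ ((2:ℝ)^(d-1) * (y + q) ^ (d-1)) * Real.exp (-((1/2) * (y + q) ^ d)) :=
              mul_le_mul hker hFy (hF0 y) (by positivity)
          _ = ψ y := by rw [hψdef]; ring
      calc (∫ y in (m+R)..l, ((q+R) + y) ^ (d - 1) * F n y)
          ≤ ∫ y in (m+R)..l, ψ y :=
            intervalIntegral.integral_mono_on hcase.le hii2' hψii hpt
        _ = ∫ y in Ioc (m+R) l, ψ y := intervalIntegral.integral_of_le hcase.le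
        _ ≤ ∫ y in Ioi (m+R), ψ y := by
            refine setIntegral_mono_set hψint ?_ Ioc_subset_Ioi_self.eventuallyLE
            refine (ae_restrict_iff' measurableSet_Ioi).mpr (Filter.Eventually.of_forall ?_)
            intro y hy
            have hyq0 : (0:ℝ) < y + q := by have := hy.out; linarith
            simp only [hψdef]
            positivity
        _ = (2:ℝ)^(d-1) * ((1 / ((1/2) * d)) * Real.exp (-((1/2) * R ^ d))) := by
            simp only [hψdef]
            rw [MeasureTheory.integral_const_mul,
              exp_tail_integral hd (by norm_num : (0:ℝ) < 1/2) hRq,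
              show (m + R) + q = R by linarith]
  -- put everything together
  have htail2 : d * ((2:ℝ)^(d-1) * ((1 / ((1/2) * d)) * Real.exp (-((1/2) * R ^ d))))
      = (2:ℝ)^d * Real.exp (-((1/2) * R ^ d)) := by
    have h2d : (2:ℝ)^d = (2:ℝ)^(d-1) * 2 := by
      rw [← Real.rpow_add_one (by norm_num : (2:ℝ) ≠ 0) (d-1)]
      congr 1; ring
    rw [h2d]
    field_simp
  have hfinal : lg2 < d * ((2*R)^d * F n 0) + lg2 / 2 := by
    have h1 : d * I ≤ d * ((2*R)^d * F n 0)
        + d * ((2:ℝ)^(d-1) * ((1 / ((1/2) * d)) * Real.exp (-((1/2) * R ^ d)))) := by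
      rw [hIsplit, mul_add]
      exact add_le_add (mul_le_mul_of_nonneg_left bound1 hd0.le)
        (mul_le_mul_of_nonneg_left bound2 hd0.le)
    rw [htail2] at h1
    linarith [hRtail, hlog]
  have hposd : (0:ℝ) < 2 * d * (2*R)^d := by
    have : (0:ℝ) < 2 * d := by linarith
    exact mul_pos this h2Rd
  have : κ < F n 0 := by
    rw [hκdef, div_lt_iff₀ hposd]
    calc lg2 = 2 * (lg2/2) := by ring
      _ < 2 * (d * ((2*R)^d * F n 0)) := by linarith
      _ = F n 0 * (2*d*(2*R)^d) := by ring
  linarith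


/-- A dominating function for the cavity integrands, given a uniform exponential tail bound. -/
lemma dominated {d : ℝ} (hd : 1 < d) {p c : ℝ} (hp0 : p ≤ 0) (hc : 0 < c) (x : ℝ) :
    ∃ g : ℝ → ℝ, IntegrableOn g (Ioi (-x)) ∧
      ∀ G : ℝ → ℝ, (∀ y, 0 ≤ G y) → (∀ y, G y ≤ 1) →
        (∀ y, -p ≤ y → G y ≤ Real.exp (-(c * (y + p) ^ d))) →
        ∀ y ∈ Ioi (-x), ‖(x + y) ^ (d - 1) * G y‖ ≤ g y := by
  have hdm1 : (0:ℝ) ≤ d - 1 := by linarith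
  set B : ℝ := max (-x) (max (-p) (x - 2*p)) + 1 with hBdef
  have hB1 : -x < B := by
    have := le_max_left (-x) (max (-p) (x - 2*p)); linarith
  have hB2 : -p < B := by
    have h := le_trans (le_max_left (-p) (x - 2*p)) (le_max_right (-x) _); linarith
  have hB3 : x - 2*p < B := by
    have h := le_trans (le_max_right (-p) (x - 2*p)) (le_max_right (-x) _); linarith
  refine ⟨fun y => if y ≤ B then (x + B) ^ (d - 1)
    else (2:ℝ) ^ (d-1) * ((y + p) ^ (d-1) * Real.exp (-(c * (y + p) ^ d))), ?_, ?_⟩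
  · rw [← Ioc_union_Ioi_eq_Ioi hB1.le]
    apply IntegrableOn.union
    · refine IntegrableOn.congr_fun (f := fun _ => (x + B) ^ (d - 1))
        (integrableOn_const (C := (x + B) ^ (d - 1)) measure_Ioc_lt_top.ne) ?_ measurableSet_Ioc
      intro y hy
      simp only [if_pos hy.2]
    · have hint : IntegrableOn
          (fun y => (y + p) ^ (d-1) * Real.exp (-(c * (y + p) ^ d))) (Ioi B) :=
        exp_tail_integrableOn hd hc (by linarith : 0 < B + p)
      refine IntegrableOn.congr_fun
        (f := fun y => (2:ℝ)^(d-1) * ((y + p) ^ (d-1) * Real.exp (-(c * (y + p) ^ d))))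
        (hint.const_mul ((2:ℝ)^(d-1))) ?_ measurableSet_Ioi
      intro y hy
      simp only [if_neg (not_le.mpr hy.out)]
  · intro G hG0 hG1 hGtail y hy
    have hxy : (0:ℝ) < x + y := by have := hy.out; linarith
    have hnn : 0 ≤ (x + y) ^ (d - 1) * G y :=
      mul_nonneg (Real.rpow_nonneg hxy.le _) (hG0 y)
    rw [Real.norm_eq_abs, abs_of_nonneg hnn]
    rcases le_or_gt y B with hyB | hyB
    · simp only [if_pos hyB]
      calc (x + y) ^ (d - 1) * G y ≤ (x + y) ^ (d - 1) * 1 :=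
            mul_le_mul_of_nonneg_left (hG1 y) (Real.rpow_nonneg hxy.le _)
        _ = (x + y) ^ (d - 1) := mul_one _
        _ ≤ (x + B) ^ (d - 1) := Real.rpow_le_rpow hxy.le (by linarith) hdm1
    · simp only [if_neg (not_le.mpr hyB)]
      have hyp : (0:ℝ) < y + p := by linarith
      have hker : (x + y) ^ (d-1) ≤ (2:ℝ)^(d-1) * (y + p) ^ (d-1) := by
        rw [← Real.mul_rpow (by norm_num) hyp.le]
        exact Real.rpow_le_rpow hxy.le (by linarith) hdm1
      calc (x + y) ^ (d - 1) * G y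
          ≤ ((2:ℝ)^(d-1) * (y + p) ^ (d-1)) * Real.exp (-(c * (y + p) ^ d)) :=
            mul_le_mul hker (hGtail y (by linarith)) (hG0 y) (by positivity)
        _ = (2:ℝ)^(d-1) * ((y + p) ^ (d-1) * Real.exp (-(c * (y + p) ^ d))) := by ring

end Helpers

/-- any pointwise limit along `λ_n → ∞` of the extended truncated
fixed points, if non-increasing and `[0,1]`-valued, solves the un-truncated
cavity equation. -/
theorem limit_of_truncated_fixedPoints_solves (d : ℝ) (hd : 1 < d)
    (lam : ℕ → ℝ) (hpos : ∀ n, 0 < lam n) (hlim : Tendsto lam atTop atTop)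
    (F : ℕ → ℝ → ℝ) (hF : ∀ n, ExtFixedPoint d (lam n) (F n))
    (f : ℝ → ℝ) (hf_anti : Antitone f) (hf_mem : ∀ x, f x ∈ Icc (0 : ℝ) 1)
    (hconv : ∀ x : ℝ, Tendsto (fun n => F n x) atTop (nhds (f x))) :
    SolvesCavity d f := by
  have hd0 : (0:ℝ) < d := by linarith
  have hdm1 : (0:ℝ) ≤ d - 1 := by linarith
  obtain ⟨p, hp0, hfp⟩ := exists_pos_point d hd lam hpos hlim F hF f hf_anti hf_mem hconv
  set c : ℝ := f p / 2 with hcdef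
  have hc : 0 < c := by rw [hcdef]; positivity
  have hc2 : c < f p := by rw [hcdef]; linarith
  have hFanti : ∀ n, Antitone (F n) := fun n => extFP_anti (hF n) (hpos n)
  have hF0 : ∀ n x, 0 ≤ F n x := fun n => extFP_nonneg (hF n) (hpos n)
  have hF1 : ∀ n x, F n x ≤ 1 := fun n => extFP_le_one (hF n) (hpos n)
  have hkermeas : ∀ (x : ℝ) (G : ℝ → ℝ), Measurable G →
      Measurable (fun y => (x + y) ^ (d - 1) * G y) := fun x G hG =>
    (((Real.continuous_rpow_const hdm1).comp
      (continuous_const.add continuous_id)).measurable).mul hG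
  have hev : ∀ᶠ n in atTop, (1 - p ≤ lam n) ∧ c ≤ F n p := by
    have e2 : ∀ᶠ n in atTop, c < F n p := (hconv p).eventually_const_lt hc2
    filter_upwards [hlim.eventually_ge_atTop (1 - p), e2] with n h1 h2
    exact ⟨h1, h2.le⟩
  obtain ⟨N, hN⟩ := eventually_atTop.mp hev
  have htail : ∀ n, N ≤ n → ∀ y, -p ≤ y → F n y ≤ Real.exp (-(c * (y + p) ^ d)) := by
    intro n hn y hy
    obtain ⟨hn1, hn2⟩ := hN n hn
    rcases le_or_gt y (lam n) with hyl | hyl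
    · have hymem : y ∈ Icc (-(lam n)) (lam n) := ⟨by linarith, hyl⟩
      exact extFP_le_exp (hF n) (hpos n) hd hymem (by linarith : -y ≤ p)
        (by linarith : p ≤ lam n) hc.le (fun t ht => le_trans hn2 ((hFanti n) ht.le))
    · rw [(hF n).2.2.2.1 y hyl]
      exact (Real.exp_pos _).le
  have hftail : ∀ y, -p ≤ y → f y ≤ Real.exp (-(c * (y + p) ^ d)) := by
    intro y hy
    refine le_of_tendsto (hconv y) ?_
    rw [eventually_atTop]; exact ⟨N, fun n hn => htail n hn y hy⟩
  refine ⟨hf_anti.measurable, hf_mem, ?_, ?_⟩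
  · -- integrability of the limit integrand
    intro x
    obtain ⟨g, hgint, hgbd⟩ := dominated hd hp0 hc x
    refine Integrable.mono' hgint
      ((hkermeas x f hf_anti.measurable).aestronglyMeasurable) ?_
    refine (ae_restrict_iff' measurableSet_Ioi).mpr (Filter.Eventually.of_forall ?_)
    intro y hy
    exact hgbd f (fun y' => (hf_mem y').1) (fun y' => (hf_mem y').2) hftail y hy
  · -- the limit equation
    intro x
    obtain ⟨g, hgint, hgbd⟩ := dominated hd hp0 hc x
    have hev2 : ∀ᶠ n in atTop, (N ≤ n) ∧ (|x| + 1 ≤ lam n) :=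
      (eventually_ge_atTop N).and (hlim.eventually_ge_atTop _)
    obtain ⟨M, hM⟩ := eventually_atTop.mp hev2
    have hFneq : ∀ n, M ≤ n →
        F n x = Real.exp (-(d * ∫ y in Ioi (-x), (x + y) ^ (d - 1) * F n y)) := by
      intro n hn
      obtain ⟨hn1, hn2⟩ := hM n hn
      have habs := abs_le.mp (show |x| ≤ lam n by linarith)
      have hxmem : x ∈ Icc (-(lam n)) (lam n) := ⟨by linarith [habs.1], habs.2⟩
      have hxl : -x ≤ lam n := by linarith [habs.1]
      have hzero : EqOn (fun y => (x + y) ^ (d - 1) * F n y) (fun _ => (0:ℝ))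
          (Ioi (lam n)) := by
        intro y hy
        simp only
        rw [(hF n).2.2.2.1 y hy.out, mul_zero]
      have hIoi : (∫ y in Ioi (-x), (x + y) ^ (d - 1) * F n y)
          = ∫ y in Ioc (-x) (lam n), (x + y) ^ (d - 1) * F n y := by
        rw [← Ioc_union_Ioi_eq_Ioi hxl,
          setIntegral_union (Ioc_disjoint_Ioi le_rfl) measurableSet_Ioi
            (ker_integrableOn ((hFanti n).measurable) (hF0 n) (hF1 n) hd x (-x) (lam n) le_rfl)
            (integrableOn_zero.congr_fun hzero.symm measurableSet_Ioi),
          setIntegral_congr_fun measurableSet_Ioi hzero]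
        simp
      rw [hIoi, ← extFP_eq (hF n) (hpos n) hxmem]
    have hDCT : Tendsto (fun k => ∫ y in Ioi (-x), (x + y) ^ (d - 1) * F (k + M) y) atTop
        (nhds (∫ y in Ioi (-x), (x + y) ^ (d - 1) * f y)) := by
      refine MeasureTheory.tendsto_integral_of_dominated_convergence g
        (fun k => (hkermeas x (F (k + M)) ((hFanti (k + M)).measurable)).aestronglyMeasurable)
        hgint ?_ ?_
      · intro k
        refine (ae_restrict_iff' measurableSet_Ioi).mpr (Filter.Eventually.of_forall ?_)
        intro y hy
        have hNk : N ≤ k + M := le_trans (hM (k + M) (Nat.le_add_left M k)).1 le_rfl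
        exact hgbd (F (k + M)) (hF0 (k + M)) (hF1 (k + M))
          (fun y' hy' => htail (k + M) hNk y' hy') y hy
      · refine (ae_restrict_iff' measurableSet_Ioi).mpr (Filter.Eventually.of_forall ?_)
        intro y _
        exact ((hconv y).comp (tendsto_add_atTop_nat M)).const_mul _
    have hlim1 : Tendsto (fun k => F (k + M) x) atTop (nhds (f x)) :=
      (hconv x).comp (tendsto_add_atTop_nat M)
    have hlim2 : Tendsto (fun k => F (k + M) x) atTop
        (nhds (Real.exp (-(d * ∫ y in Ioi (-x), (x + y) ^ (d - 1) * f y)))) := by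
      have h1 : Tendsto
          (fun k => Real.exp (-(d * ∫ y in Ioi (-x), (x + y) ^ (d - 1) * F (k + M) y))) atTop
          (nhds (Real.exp (-(d * ∫ y in Ioi (-x), (x + y) ^ (d - 1) * f y)))) :=
        (Real.continuous_exp.tendsto _).comp ((hDCT.const_mul d).neg)
      exact h1.congr fun k => (hFneq (k + M) (Nat.le_add_left M k)).symm
    exact tendsto_nhds_unique hlim1 hlim2
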